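/- For all reals n > 0 and K > 0, define S(y) = exp( −(n/(2K²)) (min(y,1))² − (n/K²) max(y − 1, 0) ) for y ≥ 0. Then ∫_0^∞ S(y) dy = ∫_0^1 e^{−n y²/(2K²)} dy + (K²/n) e^{−n/(2K²)}, and this quantity is at most max(7/16, 1/2 − n/(2⁷ K²)) + K²/n. -/

import Mathlib

open MeasureTheory

lemma T4_pos (x : ℝ) : 0 < 1 - x + x^2/2 - x^3/6 + x^4/24 := by
  nlinarith [sq_nonneg (x^2 - 2*x), sq_nonneg (x - 3/2), sq_nonneg x]

lemma exp_neg_le_T4 {x : ℝ} (hx : 0 ≤ x) :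
    Real.exp (-x) ≤ 1 - x + x^2/2 - x^3/6 + x^4/24 := by
  have hP : 1 + x + x^2/2 + x^3/6 + x^4/24 ≤ Real.exp x := by
    have h := Real.sum_le_exp_of_nonneg hx 5
    simp [Finset.sum_range_succ, Nat.factorial] at h
    linarith
  have hT := T4_pos x
  rw [Real.exp_neg, inv_eq_one_div, div_le_iff₀ (Real.exp_pos x)]
  have h2 := mul_le_mul_of_nonneg_left hP hT.le
  nlinarith [pow_nonneg hx 6, pow_nonneg hx 8]

lemma integral_T4 (c : ℝ) :
    ∫ y in (0:ℝ)..1, (1 - c*y^2 + c^2*y^4/2 - c^3*y^6/6 + c^4*y^8/24) =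
      1 - c/3 + c^2/10 - c^3/42 + c^4/216 := by
  have h : ∀ y ∈ Set.uIcc (0:ℝ) 1,
      HasDerivAt (fun t : ℝ => t - c*t^3/3 + c^2*t^5/10 - c^3*t^7/42 + c^4*t^9/216)
        (1 - c*y^2 + c^2*y^4/2 - c^3*y^6/6 + c^4*y^8/24) y := by
    intro y _
    have h1 := ((((hasDerivAt_id y).sub
        (((hasDerivAt_pow 3 y).const_mul c).div_const 3)).add
        (((hasDerivAt_pow 5 y).const_mul (c^2)).div_const 10)).sub
        (((hasDerivAt_pow 7 y).const_mul (c^3)).div_const 42)).add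
        (((hasDerivAt_pow 9 y).const_mul (c^4)).div_const 216)
    refine h1.congr_deriv ?_
    push_cast
    ring
  rw [intervalIntegral.integral_eq_sub_of_hasDerivAt h
    ((by fun_prop : Continuous fun y : ℝ =>
      1 - c*y^2 + c^2*y^4/2 - c^3*y^6/6 + c^4*y^8/24).intervalIntegrable 0 1)]
  norm_num

/-- For `n, K > 0` and the survival function
`S(y) = exp(-(n/(2K²)) (min(y,1))² - (n/K²) (y-1)₊)`, the integral `∫_0^∞ S(y) dy` equals
`∫_0^1 e^{-n y²/(2K²)} dy + (K²/n) e^{-n/(2K²)}`, and is at most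
`max(7/16, 1/2 - n/(2⁷K²)) + K²/n`. -/
theorem survival_first_moment (n K : ℝ) (hn : 0 < n) (hK : 0 < K) :
    (∫ y in Set.Ioi (0 : ℝ),
        Real.exp (-(n / (2 * K ^ 2)) * (min y 1) ^ 2 - (n / K ^ 2) * max (y - 1) 0)) =
      (∫ y in (0 : ℝ)..1, Real.exp (-n * y ^ 2 / (2 * K ^ 2))) +
        (K ^ 2 / n) * Real.exp (-n / (2 * K ^ 2)) ∧
    (∫ y in Set.Ioi (0 : ℝ),
        Real.exp (-(n / (2 * K ^ 2)) * (min y 1) ^ 2 - (n / K ^ 2) * max (y - 1) 0)) ≤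
      max (7 / 16) (1 / 2 - n / (2 ^ 7 * K ^ 2)) + K ^ 2 / n := by
  open Set in
  have hK2 : (0:ℝ) < K ^ 2 := by positivity
  have hb : (0:ℝ) < n / K ^ 2 := by positivity
  -- the equality
  set F : ℝ → ℝ := fun y =>
    Real.exp (-(n / (2 * K ^ 2)) * (min y 1) ^ 2 - (n / K ^ 2) * max (y - 1) 0) with hF
  have hcont : Continuous F := by
    apply Real.continuous_exp.comp
    fun_prop
  have hInt1 : IntegrableOn F (Set.Ioc (0:ℝ) 1) := hcont.integrableOn_Ioc
  have hInt2 : IntegrableOn F (Set.Ioi (1:ℝ)) := by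
    have h0 : IntegrableOn (fun y : ℝ => Real.exp (n / (2*K^2)) * Real.exp (-(n/K^2) * y))
        (Set.Ioi (1:ℝ)) := (exp_neg_integrableOn_Ioi 1 hb).const_mul _
    apply h0.congr_fun _ measurableSet_Ioi
    intro y hy
    rw [hF]
    simp only
    rw [min_eq_right (le_of_lt hy), max_eq_left (by linarith [Set.mem_Ioi.mp hy] : (0:ℝ) ≤ y - 1),
      ← Real.exp_add]
    congr 1
    ring
  have hsplit : (∫ y in Set.Ioi (0:ℝ), F y)
      = (∫ y in Set.Ioc (0:ℝ) 1, F y) + ∫ y in Set.Ioi (1:ℝ), F y := by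
    rw [← Set.Ioc_union_Ioi_eq_Ioi (zero_le_one (α := ℝ)),
      setIntegral_union (Set.Ioc_disjoint_Ioi le_rfl) measurableSet_Ioi hInt1 hInt2]
  have hIoc : (∫ y in Set.Ioc (0:ℝ) 1, F y)
      = ∫ y in (0:ℝ)..1, Real.exp (-n * y ^ 2 / (2 * K ^ 2)) := by
    rw [intervalIntegral.integral_of_le zero_le_one]
    apply setIntegral_congr_fun measurableSet_Ioc
    intro y hy
    rw [hF]
    simp only
    rw [min_eq_left hy.2, max_eq_right (by linarith [hy.2] : y - 1 ≤ 0)]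
    congr 1
    ring
  have hIoi : (∫ y in Set.Ioi (1:ℝ), F y) = (K ^ 2 / n) * Real.exp (-n / (2 * K ^ 2)) := by
    have e1 : (∫ y in Set.Ioi (1:ℝ), F y)
        = ∫ y in Set.Ioi (1:ℝ), Real.exp (n / (2*K^2)) * Real.exp (-((n/K^2) * y)) := by
      apply setIntegral_congr_fun measurableSet_Ioi
      intro y hy
      rw [hF]
      simp only
      rw [min_eq_right (le_of_lt hy), max_eq_left (by linarith [Set.mem_Ioi.mp hy] : (0:ℝ) ≤ y - 1),
        ← Real.exp_add]
      congr 1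
      ring
    rw [e1, MeasureTheory.integral_const_mul,
      integral_comp_mul_left_Ioi (fun x => Real.exp (-x)) 1 hb, mul_one, integral_exp_neg_Ioi,
      smul_eq_mul, ← mul_assoc, mul_comm (Real.exp (n / (2*K^2))) ((n/K^2)⁻¹), mul_assoc,
      ← Real.exp_add]
    rw [show n / (2*K^2) + -(n/K^2) = -n/(2*K^2) by ring, inv_div]
  have heq : (∫ y in Set.Ioi (0:ℝ), F y)
      = (∫ y in (0 : ℝ)..1, Real.exp (-n * y ^ 2 / (2 * K ^ 2))) +
        (K ^ 2 / n) * Real.exp (-n / (2 * K ^ 2)) := by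
    rw [hsplit, hIoc, hIoi]
  refine ⟨heq, ?_⟩
  rw [heq]
  clear_value F
  clear hsplit hIoc hIoi hInt1 hInt2 hcont heq hF F hb
  -- the inequality
  obtain ⟨c, hc_def⟩ : ∃ c : ℝ, c = n / (2 * K ^ 2) := ⟨_, rfl⟩
  have hc : 0 < c := by rw [hc_def]; positivity
  have hKn : K ^ 2 / n = 1 / (2 * c) := by
    rw [hc_def]; field_simp
  have h128 : n / (2 ^ 7 * K ^ 2) = c / 64 := by rw [hc_def]; ring
  have hexpc : -n / (2 * K ^ 2) = -c := by rw [hc_def]; ring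
  have hcexp : Continuous fun y : ℝ => Real.exp (-n * y ^ 2 / (2 * K ^ 2)) := by fun_prop
  rcases le_or_gt c 2 with hc2 | hc2
  · -- small c: use the 1/2 - c/64 branch
    have hI : (∫ y in (0 : ℝ)..1, Real.exp (-n * y ^ 2 / (2 * K ^ 2))) ≤
        1 - c/3 + c^2/10 - c^3/42 + c^4/216 := by
      rw [← integral_T4 c]
      apply intervalIntegral.integral_mono_on zero_le_one
        (hcexp.intervalIntegrable 0 1)
        ((by fun_prop : Continuous fun y : ℝ =>
          1 - c*y^2 + c^2*y^4/2 - c^3*y^6/6 + c^4*y^8/24).intervalIntegrable 0 1)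
      intro y _
      have e : -n * y ^ 2 / (2 * K ^ 2) = -(c * y^2) := by rw [hc_def]; ring
      rw [e]
      refine le_of_le_of_eq (exp_neg_le_T4 (by positivity)) (by ring)
    have hE : K ^ 2 / n * Real.exp (-n / (2 * K ^ 2)) ≤
        (1 - c + c^2/2 - c^3/6 + c^4/24) * (1/(2*c)) := by
      rw [hKn, hexpc, mul_comm]
      exact mul_le_mul_of_nonneg_right (exp_neg_le_T4 hc.le) (by positivity)
    have e2 : (1 - c + c^2/2 - c^3/6 + c^4/24) * (1/(2*c)) =
        1/(2*c) - (1/2 - c/4 + c^2/12 - c^3/48) := by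
      field_simp
      ring
    have hfinal : (1 - c/3 + c^2/10 - c^3/42 + c^4/216) -
        (1/2 - c/4 + c^2/12 - c^3/48) ≤ 1/2 - c/64 := by
      nlinarith [mul_nonneg (mul_nonneg (sub_nonneg.2 hc2) (sq_nonneg c)) hc.le,
        mul_nonneg (sub_nonneg.2 hc2) (sq_nonneg c),
        mul_nonneg (sub_nonneg.2 hc2) hc.le, hc.le]
    have hmax : (1:ℝ)/2 - c/64 ≤ max (7 / 16) (1 / 2 - n / (2 ^ 7 * K ^ 2)) := by
      rw [h128]
      exact le_max_right _ _
    rw [hKn] at hE ⊢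
    linarith
  · -- large c: Gaussian bound and the 7/16 branch
    have hI : (∫ y in (0 : ℝ)..1, Real.exp (-n * y ^ 2 / (2 * K ^ 2))) ≤
        Real.sqrt (Real.pi / c) / 2 := by
      have e1 : (∫ y in (0 : ℝ)..1, Real.exp (-n * y ^ 2 / (2 * K ^ 2))) =
          ∫ y in Set.Ioc (0:ℝ) 1, Real.exp (-c * y ^ 2) := by
        rw [intervalIntegral.integral_of_le zero_le_one]
        refine setIntegral_congr_fun measurableSet_Ioc fun y _ => ?_
        rw [show -n * y ^ 2 / (2 * K ^ 2) = -c * y ^ 2 by rw [hc_def]; ring]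
      rw [e1, ← integral_gaussian_Ioi c]
      exact setIntegral_mono_set (integrable_exp_neg_mul_sq hc).integrableOn
        (Filter.Eventually.of_forall fun x => (Real.exp_pos _).le)
        (HasSubset.Subset.eventuallyLE Set.Ioc_subset_Ioi_self)
    obtain ⟨s, hs_def⟩ : ∃ s : ℝ, s = Real.sqrt c := ⟨_, rfl⟩
    have hs0 : 0 < s := hs_def ▸ Real.sqrt_pos.mpr hc
    have hcs : c = s ^ 2 := by rw [hs_def, Real.sq_sqrt hc.le]
    have hs : (1.414:ℝ) ≤ s := by
      rw [hs_def, show (1.414:ℝ) = Real.sqrt (1.414^2) by rw [Real.sqrt_sq (by norm_num)]]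
      exact Real.sqrt_le_sqrt (by norm_num; linarith)
    have hsπ : Real.sqrt Real.pi ≤ 1.7725 := by
      rw [show (1.7725:ℝ) = Real.sqrt (1.7725^2) by rw [Real.sqrt_sq (by norm_num)]]
      exact Real.sqrt_le_sqrt (by nlinarith [Real.pi_lt_d6])
    have hsqrtdiv : Real.sqrt (Real.pi / c) = Real.sqrt Real.pi / s := by
      rw [Real.sqrt_div Real.pi_pos.le, hs_def]
    have hexp2 : Real.exp (-c) ≤ 0.1354 := by
      have h1 : Real.exp (-c) ≤ Real.exp (-2) := Real.exp_le_exp.mpr (by linarith)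
      have h2 : Real.exp (-2) ≤ 0.1354 := by
        rw [Real.exp_neg, inv_eq_one_div, div_le_iff₀ (Real.exp_pos 2)]
        have h3 : (2.7182818283:ℝ) < Real.exp 1 := Real.exp_one_gt_d9
        have h4 : Real.exp 2 = Real.exp 1 * Real.exp 1 := by rw [← Real.exp_add]; norm_num
        nlinarith [Real.exp_pos 1]
      linarith
    have hkey : Real.sqrt Real.pi * s ≤ 7/8 * s^2 + 0.8646 := by
      nlinarith [mul_le_mul_of_nonneg_right hsπ hs0.le, hs, sq_nonneg (s - 1.414)]
    have e3 : Real.sqrt (Real.pi / c) / 2 = (Real.sqrt Real.pi * s)/(2*s^2) := by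
      rw [hsqrtdiv]
      field_simp
    have e4 : (Real.sqrt Real.pi * s)/(2*s^2) ≤ (7/8*s^2 + 0.8646)/(2*s^2) := by
      gcongr
    have e5 : (7/8*s^2 + (0.8646:ℝ))/(2*s^2) = 7/16 + 0.8646/(2*s^2) := by
      field_simp
      ring
    have e6 : (0.8646:ℝ)/(2*s^2) ≤ (1 - Real.exp (-c))/(2*s^2) := by
      gcongr
      linarith
    have e7 : (1 - Real.exp (-c))/(2*s^2) = 1/(2*c) - (1/(2*c)) * Real.exp (-c) := by
      rw [hcs]
      ring
    have hmax : (7:ℝ)/16 ≤ max (7 / 16) (1 / 2 - n / (2 ^ 7 * K ^ 2)) := le_max_left _ _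
    rw [hKn, hexpc] at *
    linarith
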